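/- Let G be a finite group with Sylow p-subgroup P and suppose Q is a normal subgroup of G with P' ≤ Q ≤ Φ(P). If N_G(P) is p-nilpotent, then G is p-nilpotent. -/

import Mathlib

open Subgroup MulAction
open scoped Pointwise
open scoped commutatorElement

lemma map_subtype_conj {G : Type*} [Group G] (K : Subgroup G) (k : ↥K) (A : Subgroup ↥K) :
    (A.map (MulAut.conj k).toMonoidHom).map K.subtype
      = (A.map K.subtype).map (MulAut.conj (k : G)).toMonoidHom := by
  rw [Subgroup.map_map, Subgroup.map_map]
  congr 1

-- normalizer membership from map-conj
lemma mem_normalizer_of_map_conj {G : Type*} [Group G] {H : Subgroup G} {g : G}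
    (h : H.map (MulAut.conj g).toMonoidHom = H) : g ∈ (Subgroup.normalizer (H : Set G)) := by
  rw [mem_normalizer_iff]
  intro x
  constructor
  · intro hx
    rw [← h]
    exact ⟨x, hx, rfl⟩
  · intro hx
    rw [← h] at hx
    obtain ⟨y, hy, hxy⟩ := hx
    simp only [MulEquiv.coe_toMonoidHom, MulAut.conj_apply] at hxy
    have : y = x := by
      have := mul_left_cancel ((mul_right_cancel hxy))
      exact this
    rwa [← this]

lemma map_conj_of_mem_normalizer {G : Type*} [Group G] {H : Subgroup G} {g : G}
    (h : g ∈ (Subgroup.normalizer (H : Set G))) : H.map (MulAut.conj g).toMonoidHom = H := by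
  ext x
  rw [mem_normalizer_iff] at h
  constructor
  · rintro ⟨y, hy, rfl⟩
    exact (h y).mp hy
  · intro hx
    refine ⟨g⁻¹ * x * g, ?_, by simp [mul_assoc]⟩
    have := (h (g⁻¹ * x * g)).mpr
    simp only [mul_assoc] at this ⊢
    apply this
    simpa [mul_assoc] using hx

section
variable {G : Type*} [Group G] [Finite G] (H : Subgroup G) [H.Normal] [IsMulCommutative H]

noncomputable def mkQD (α : H.LeftTransversal) : H.QuotientDiff := Quotient.mk'' α

lemma smul_mkQD (g : G) (α : H.LeftTransversal) :
    g • mkQD H α = mkQD H (MulOpposite.op g⁻¹ • α) := rfl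

variable {H}

lemma stabilizer_quotientDiff_eq {K : Subgroup G}
    (hcop : Nat.Coprime (Nat.card H) H.index)
    (hK : Subgroup.IsComplement' H K) :
    stabilizer G (mkQD H ⟨(K : Set G), hK.symm⟩) = K := by
  set α : H.LeftTransversal := ⟨(K : Set G), hK.symm⟩
  have hle : K ≤ stabilizer G (mkQD H α) := by
    intro k hk
    rw [mem_stabilizer_iff, smul_mkQD]
    congr 1
    refine Subtype.ext ?_
    show (MulOpposite.op k⁻¹ • (K : Set G)) = (K : Set G)
    ext x
    simp only [Set.mem_smul_set]
    constructor
    · rintro ⟨y, hy, rfl⟩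
      exact K.mul_mem hy (K.inv_mem hk)
    · intro hx
      exact ⟨x * k, K.mul_mem hx hk, by simp [MulOpposite.smul_eq_mul_unop]⟩
  have hcomp := isComplement'_stabilizer_of_coprime (α := mkQD H α) hcop
  refine (Subgroup.eq_of_le_of_card_ge hle ?_).symm
  have h1 := hcomp.card_mul
  have h2 := hK.card_mul
  exact le_of_eq (Nat.eq_of_mul_eq_mul_left Nat.card_pos (h1.trans h2.symm))

lemma exists_conj_of_isComplement'_comm {K1 K2 : Subgroup G}
    (hcop : Nat.Coprime (Nat.card H) H.index)
    (h1 : Subgroup.IsComplement' H K1) (h2 : Subgroup.IsComplement' H K2) :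
    ∃ g : G, K2 = K1.map (MulAut.conj g).toMonoidHom := by
  obtain ⟨h, hh⟩ := exists_smul_eq hcop (mkQD H ⟨(K1 : Set G), h1.symm⟩)
    (mkQD H ⟨(K2 : Set G), h2.symm⟩)
  refine ⟨(h : G), ?_⟩
  have e1 := stabilizer_quotientDiff_eq hcop h1
  have e2 := stabilizer_quotientDiff_eq hcop h2
  have hh' : (h : G) • (mkQD H ⟨(K1 : Set G), h1.symm⟩) = mkQD H ⟨(K2 : Set G), h2.symm⟩ := hh
  rw [← e2, ← hh', stabilizer_smul_eq_stabilizer_map_conj, e1]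
end

universe u

lemma normal_map_subtype_of_char {G : Type*} [Group G] {Q : Subgroup G} [Q.Normal]
    (Z : Subgroup ↥Q) [Z.Characteristic] : (Z.map Q.subtype).Normal := by
  constructor
  intro z hz g
  obtain ⟨z₀, hz₀, rfl⟩ := hz
  have h1 : (MulAut.conjNormal g : MulAut ↥Q) z₀ ∈ Z := by
    rw [← Subgroup.characteristic_iff_map_eq.mp ‹Z.Characteristic›
      ((MulAut.conjNormal g : MulAut ↥Q))]
    exact ⟨z₀, hz₀, rfl⟩
  exact ⟨_, h1, by simp [MulAut.conjNormal_apply]⟩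

lemma map_conj_comm {G G' : Type*} [Group G] [Group G'] (f : G →* G') (g : G) (K : Subgroup G) :
    (K.map (MulAut.conj g).toMonoidHom).map f = (K.map f).map (MulAut.conj (f g)).toMonoidHom := by
  rw [Subgroup.map_map, Subgroup.map_map]
  congr 1
  ext x
  simp

lemma conj_mul_map {G : Type*} [Group G] (a b : G) (K : Subgroup G) :
    (K.map (MulAut.conj b).toMonoidHom).map (MulAut.conj a).toMonoidHom
      = K.map (MulAut.conj (a * b)).toMonoidHom := by
  rw [Subgroup.map_map]
  congr 1
  ext x
  simp [mul_assoc]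

lemma exists_conj_of_isComplement'_pgroup {p : ℕ} [Fact p.Prime] :
    ∀ (n : ℕ) (G : Type u) (_ : Group G) (_ : Finite G) (Q K1 K2 : Subgroup G) (_ : Q.Normal),
      IsPGroup p Q → Nat.Coprime (Nat.card Q) Q.index → Nat.card Q ≤ n →
      Subgroup.IsComplement' Q K1 → Subgroup.IsComplement' Q K2 →
      ∃ g : G, K2 = K1.map (MulAut.conj g).toMonoidHom := by
  intro n
  induction n using Nat.strong_induction_on with
  | _ n ih =>
  intro G _ _ Q K1 K2 _ hQ hcop hn h1 h2
  rcases eq_or_ne Q ⊥ with hbot | hbot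
  · subst hbot
    rw [Subgroup.isComplement'_bot_left] at h1 h2
    refine ⟨1, ?_⟩
    rw [h1, h2]
    exact (Subgroup.map_top_of_surjective _ (MulEquiv.surjective _)).symm
  · haveI : Nontrivial ↥Q := Q.nontrivial_iff_ne_bot.mpr hbot
    set Z : Subgroup G := (Subgroup.center ↥Q).map Q.subtype with hZdef
    haveI hZn : Z.Normal := normal_map_subtype_of_char _
    haveI hZc : IsMulCommutative Z := by
      haveI : IsMulCommutative (Subgroup.center ↥Q) := ⟨⟨fun a b => Subtype.ext
        ((Subgroup.mem_center_iff.mp b.2) a)⟩⟩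
      exact Subgroup.map_isMulCommutative _ _
    have hZQ : Z ≤ Q := Subgroup.map_subtype_le _
    haveI : Nontrivial ↥Z := by
      haveI := IsPGroup.center_nontrivial hQ
      exact ((Subgroup.equivMapOfInjective _ _ Q.subtype_injective).toEquiv).symm.nontrivial
    set π := QuotientGroup.mk' Z with hπdef
    have hπs : Function.Surjective π := QuotientGroup.mk'_surjective Z
    have hker : π.ker = Z := QuotientGroup.ker_mk' Z
    set Qb := Q.map π with hQbdef
    set K1b := K1.map π with hK1bdef
    set K2b := K2.map π with hK2bdef
    haveI : Qb.Normal := Subgroup.Normal.map ‹Q.Normal› π hπs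
    have hQb : IsPGroup p Qb := hQ.map π
    -- disjointness upstairs
    have hdisj : ∀ K : Subgroup G, Subgroup.IsComplement' Q K → Disjoint Qb (K.map π) := by
      intro K hK
      rw [disjoint_iff_inf_le]
      rintro x ⟨⟨q, hq, rfl⟩, ⟨k, hk, hqk⟩⟩
      have : q⁻¹ * k ∈ Z := by
        rw [← hker, MonoidHom.mem_ker, map_mul, map_inv, ← hqk, inv_mul_cancel]
      have hkQ : k ∈ Q := by
        have := Q.mul_mem hq (hZQ this)
        rwa [mul_inv_cancel_left] at this
      have hk1 : k = 1 := by
        have := hK.disjoint.le_bot (Subgroup.mem_inf.mpr ⟨hkQ, hk⟩)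
        simpa using this
      rw [Subgroup.mem_bot, ← hqk, hk1, map_one]
    have hcompb : ∀ K : Subgroup G, Subgroup.IsComplement' Q K →
        Subgroup.IsComplement' Qb (K.map π) := by
      intro K hK
      refine Subgroup.isComplement'_of_disjoint_and_mul_eq_univ (hdisj K hK) ?_
      rw [Set.eq_univ_iff_forall]
      intro x
      obtain ⟨y, rfl⟩ := hπs x
      obtain ⟨⟨q, k⟩, hqk⟩ := hK.2 y
      have hqk' : (q : G) * (k : G) = y := hqk
      refine ⟨π q, ⟨q, q.2, rfl⟩, π k, ⟨k, k.2, rfl⟩, ?_⟩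
      show π q * π k = π y
      rw [← map_mul, hqk']
    have hc1b := hcompb K1 h1
    have hc2b := hcompb K2 h2
    -- cardinality drop
    have hcards : Nat.card Qb * Nat.card Z = Nat.card Q := by
      set f := π.comp Q.subtype with hfdef
      have hkerf : f.ker = Z.subgroupOf Q := by
        rw [hfdef, ← MonoidHom.comap_ker, hker]; rfl
      have hrangef : f.range = Qb := by
        rw [hfdef, MonoidHom.range_comp, Subgroup.range_subtype]
      have e1 : Nat.card ↥Q = Nat.card (↥Q ⧸ f.ker) * Nat.card f.ker :=
        Subgroup.card_eq_card_quotient_mul_card_subgroup f.ker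
      have e2 : Nat.card (↥Q ⧸ f.ker) = Nat.card Qb := by
        rw [← hrangef]
        exact Nat.card_congr (QuotientGroup.quotientKerEquivRange f).toEquiv
      have e3 : Nat.card f.ker = Nat.card Z := by
        rw [hkerf]
        exact Nat.card_congr (Subgroup.subgroupOfEquivOfLe hZQ).toEquiv
      rw [e1, e2, e3]
    have hZ1 : 1 < Nat.card Z := Finite.one_lt_card
    have hQblt : Nat.card Qb < n := by
      have h0 : 0 < Nat.card Qb := Nat.card_pos
      calc Nat.card Qb < Nat.card Qb * Nat.card Z := by
            nlinarith
        _ = Nat.card Q := hcards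
        _ ≤ n := hn
    -- coprime downstairs
    have hcopb : Nat.Coprime (Nat.card Qb) Qb.index := by
      have e1 : Qb.index = Nat.card K1b := hc1b.symm.index_eq_card
      have e2 : Q.index = Nat.card K1 := h1.symm.index_eq_card
      have d1 : Nat.card Qb ∣ Nat.card Q := ⟨Nat.card Z, hcards.symm⟩
      have d2 : Nat.card K1b ∣ Nat.card K1 := by
        have hr : (π.comp K1.subtype).range = K1b := by
          rw [MonoidHom.range_comp, Subgroup.range_subtype]
        have := Subgroup.card_dvd_of_surjective ((π.comp K1.subtype).rangeRestrict)
          ((π.comp K1.subtype).rangeRestrict_surjective)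
        rwa [hr] at this
      rw [e1]
      exact Nat.Coprime.coprime_dvd_right d2 (Nat.Coprime.coprime_dvd_left d1 (e2 ▸ hcop))
    obtain ⟨gb, hgb⟩ := ih (Nat.card Qb) hQblt (G ⧸ Z) inferInstance inferInstance Qb K1b K2b inferInstance hQb hcopb le_rfl hc1b hc2b
    obtain ⟨g, rfl⟩ := hπs gb
    -- pull back
    have hpull : Z ⊔ K2 = Z ⊔ K1.map (MulAut.conj g).toMonoidHom := by
      have e1 : Subgroup.comap π K2b = K2 ⊔ Z := by
        rw [hK2bdef, Subgroup.comap_map_eq, hker]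
      have e2 : Subgroup.comap π ((K1.map (MulAut.conj g).toMonoidHom).map π)
          = K1.map (MulAut.conj g).toMonoidHom ⊔ Z := by
        rw [Subgroup.comap_map_eq, hker]
      have e3 : (K1.map (MulAut.conj g).toMonoidHom).map π = K2b := by
        rw [map_conj_comm, ← hK1bdef, ← hgb]
      rw [sup_comm Z K2, sup_comm Z (K1.map (MulAut.conj g).toMonoidHom), ← e1, ← e3, e2]
    set L := Z ⊔ K2 with hLdef
    have hZL : Z ≤ L := le_sup_left
    have hK2L : K2 ≤ L := le_sup_right
    have hK1gL : K1.map (MulAut.conj g).toMonoidHom ≤ L := by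
      rw [hpull]; exact le_sup_right
    set Z' := Z.subgroupOf L with hZ'def
    set A := K2.subgroupOf L with hAdef
    set B := (K1.map (MulAut.conj g).toMonoidHom).subgroupOf L with hBdef
    -- complements in L
    have hdisjZQ : Disjoint Z K2 := h2.disjoint.mono_left hZQ
    have hdisjZK1g : Disjoint Z (K1.map (MulAut.conj g).toMonoidHom) := by
      have hQg : Q.map (MulAut.conj g).toMonoidHom = Q :=
        map_conj_of_mem_normalizer (by rw [Subgroup.normalizer_eq_top_iff.mpr ‹Q.Normal›]; trivial)
      have hd : Disjoint Q (K1.map (MulAut.conj g).toMonoidHom) := by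
        rw [disjoint_iff]
        conv_lhs => rw [← hQg]
        rw [← Subgroup.map_inf _ _ _ (MulEquiv.injective _), h1.disjoint.eq_bot,
          Subgroup.map_bot]
      exact hd.mono_left hZQ
    have hsubcomp : ∀ K : Subgroup G, K ≤ L → Z ⊔ K = L → Disjoint Z K →
        Subgroup.IsComplement' Z' (K.subgroupOf L) := by
      intro K hKL hsup hdisj
      refine Subgroup.isComplement'_of_disjoint_and_mul_eq_univ ?_ ?_
      · rw [disjoint_iff_inf_le]
        rintro x ⟨hx1, hx2⟩
        have : (x : G) ∈ Z ⊓ K := ⟨hx1, hx2⟩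
        rw [hdisj.eq_bot] at this
        simpa [Subgroup.mem_bot, ← Subtype.ext_iff] using this
      · rw [Set.eq_univ_iff_forall]
        intro x
        have hx : (x : G) ∈ (↑(Z ⊔ K) : Set G) := by rw [hsup]; exact x.2
        rw [Subgroup.normal_mul] at hx
        obtain ⟨z, hz, k, hk, hzk⟩ := hx
        refine ⟨⟨z, hZL hz⟩, hz, ⟨k, hKL hk⟩, hk, ?_⟩
        show (⟨z, hZL hz⟩ * ⟨k, hKL hk⟩ : ↥L) = x
        exact Subtype.ext hzk
    have hA : Subgroup.IsComplement' Z' A := hsubcomp K2 hK2L rfl hdisjZQ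
    have hB : Subgroup.IsComplement' Z' B :=
      hsubcomp _ hK1gL hpull.symm hdisjZK1g
    -- coprimality in L
    have hcopL : Nat.Coprime (Nat.card Z') Z'.index := by
      have e1 : Nat.card Z' = Nat.card Z :=
        Nat.card_congr (Subgroup.subgroupOfEquivOfLe hZL).toEquiv
      have e2 : Z'.index = Nat.card A := hA.symm.index_eq_card
      have e3 : Nat.card A = Nat.card K2 :=
        Nat.card_congr (Subgroup.subgroupOfEquivOfLe hK2L).toEquiv
      have d1 : Nat.card Z ∣ Nat.card Q := Subgroup.card_dvd_of_le hZQ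
      have e4 : Q.index = Nat.card K2 := h2.symm.index_eq_card
      rw [e1, e2, e3]
      exact Nat.Coprime.coprime_dvd_left d1 (e4 ▸ hcop)
    obtain ⟨l, hl⟩ := exists_conj_of_isComplement'_comm hcopL hB hA
    refine ⟨(l : G) * g, ?_⟩
    have := congrArg (fun S => Subgroup.map L.subtype S) hl
    simp only [map_subtype_conj] at this
    rw [hAdef, hBdef, Subgroup.subgroupOf_map_subtype, Subgroup.subgroupOf_map_subtype,
      inf_of_le_left hK2L, inf_of_le_left hK1gL] at this
    rw [this, conj_mul_map]

/-- A group is `p`-nilpotent if it has a normal `p`-complement. -/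
def IsPNilpotent (p : ℕ) (G : Type*) [Group G] : Prop :=
  ∃ (P : Sylow p G) (K : Subgroup G), K.Normal ∧ Subgroup.IsComplement' (P : Subgroup G) K

theorem navarro_normal_case (p : ℕ) [Fact p.Prime] (G : Type*) [Group G] [Finite G]
    (P : Sylow p G) (Q : Subgroup G) (hQ : Q.Normal)
    (hP' : (commutator ↥(P : Subgroup G)).map (P : Subgroup G).subtype ≤ Q)
    (hΦ : Q ≤ (frattini ↥(P : Subgroup G)).map (P : Subgroup G).subtype)
    (hN : IsPNilpotent p ((Subgroup.normalizer ((P : Subgroup G) : Set G)))) :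
    IsPNilpotent p G := by
  classical
  obtain ⟨PN, KN, hKNn, hKNc⟩ := hN
  have hPle : (P : Subgroup G) ≤ (Subgroup.normalizer ((P : Subgroup G) : Set G)) := Subgroup.le_normalizer
  have hQP : Q ≤ (P : Subgroup G) := hΦ.trans (Subgroup.map_subtype_le _)
  -- identify the Sylow subgroup of the normalizer
  haveI := Sylow.unique_of_normal (P.subtype hPle)
    (by rw [Sylow.coe_subtype]; exact Subgroup.normal_in_normalizer)
  have hPN : PN = P.subtype hPle := Subsingleton.elim _ _
  rw [hPN, Sylow.coe_subtype] at hKNc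
  -- the complement KN centralizes P
  have hcent : ∀ c ∈ KN.map ((Subgroup.normalizer ((P : Subgroup G) : Set G))).subtype,
      ∀ x ∈ (P : Subgroup G), c * x = x * c := by
    intro c hc x hx
    obtain ⟨c', hc', rfl⟩ := hc
    set x' : ↥(Subgroup.normalizer ((P : Subgroup G) : Set G)) := ⟨x, hPle hx⟩ with hx'def
    have hx' : x' ∈ (P : Subgroup G).subgroupOf (Subgroup.normalizer ((P : Subgroup G) : Set G)) := hx
    have hcomm : c' * x' * c'⁻¹ * x'⁻¹ = 1 := by
      have h1 : c' * x' * c'⁻¹ * x'⁻¹ ∈ KN := by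
        have := KN.mul_mem hc' (hKNn.conj_mem _ (KN.inv_mem hc') x')
        simpa [mul_assoc] using this
      have h2 : c' * x' * c'⁻¹ * x'⁻¹ ∈
          (P : Subgroup G).subgroupOf (Subgroup.normalizer ((P : Subgroup G) : Set G)) := by
        exact Subgroup.mul_mem _ (Subgroup.normal_in_normalizer.conj_mem _ hx' c')
          (Subgroup.inv_mem _ hx')
      have := hKNc.disjoint.le_bot (Subgroup.mem_inf.mpr ⟨h2, h1⟩)
      simpa using this
    have e1 : c' * x' * c'⁻¹ = x' := by rwa [mul_inv_eq_one] at hcomm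
    have e2 : c' * x' = x' * c' := by rwa [mul_inv_eq_iff_eq_mul] at e1
    exact congrArg Subtype.val e2
  -- pass to the quotient G/Q
  set π := QuotientGroup.mk' Q with hπdef
  have hπs : Function.Surjective π := QuotientGroup.mk'_surjective Q
  have hker : π.ker = Q := QuotientGroup.ker_mk' Q
  set Pb : Sylow p (G ⧸ Q) := P.mapSurjective hπs with hPbdef
  have hPbcoe : (Pb : Subgroup (G ⧸ Q)) = (P : Subgroup G).map π := rfl
  -- normalizer of Pb is contained in its centralizer
  have hNC : Subgroup.normalizer ((Pb : Subgroup (G ⧸ Q)) : Set (G ⧸ Q)) ≤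
      Subgroup.centralizer (Pb : Set (G ⧸ Q)) := by
    intro nb hnb
    obtain ⟨g, rfl⟩ := hπs nb
    have hgP : g ∈ (Subgroup.normalizer ((P : Subgroup G) : Set G)) := by
      have hmap : (P : Subgroup G).map (MulAut.conj g).toMonoidHom = (P : Subgroup G) := by
        have e3 : ((P : Subgroup G).map (MulAut.conj g).toMonoidHom).map π
            = (P : Subgroup G).map π := by
          rw [map_conj_comm]
          rw [hPbcoe] at hnb
          exact map_conj_of_mem_normalizer hnb
        have hQle : Q ≤ (P : Subgroup G).map (MulAut.conj g).toMonoidHom := by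
          intro q hq
          refine ⟨g⁻¹ * q * g, hQP (by simpa using hQ.conj_mem q hq g⁻¹), ?_⟩
          simp [mul_assoc]
        have := congrArg (Subgroup.comap π) e3
        rwa [Subgroup.comap_map_eq, Subgroup.comap_map_eq, hker,
          sup_eq_left.mpr hQle, sup_eq_left.mpr hQP] at this
      exact mem_normalizer_of_map_conj hmap
    obtain ⟨⟨pn, kn⟩, hpk⟩ := hKNc.2 ⟨g, hgP⟩
    have hgfac : g = (pn : G) * ((kn : (Subgroup.normalizer ((P : Subgroup G) : Set G))) : G) := by
      have : ((pn : (Subgroup.normalizer ((P : Subgroup G) : Set G))) * kn : (Subgroup.normalizer ((P : Subgroup G) : Set G))) =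
        ⟨g, hgP⟩ := hpk
      exact (congrArg Subtype.val this).symm
    set pg : G := ((pn : (Subgroup.normalizer ((P : Subgroup G) : Set G))) : G) with hpgdef
    set kg : G := ((kn : (Subgroup.normalizer ((P : Subgroup G) : Set G))) : G) with hkgdef
    have hpgP : pg ∈ (P : Subgroup G) := pn.2
    have hkgKN : kg ∈ KN.map ((Subgroup.normalizer ((P : Subgroup G) : Set G))).subtype := ⟨kn, kn.2, rfl⟩
    rw [Subgroup.mem_centralizer_iff]
    rintro h hh
    obtain ⟨x, hx, rfl⟩ := hh
    have c1 : π kg * π x = π x * π kg := by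
      rw [← map_mul, ← map_mul, hcent kg hkgKN x hx]
    have c2 : π pg * π x = π x * π pg := by
      have hcq : pg * x * pg⁻¹ * x⁻¹ ∈ Q := by
        apply hP'
        exact ⟨⁅(⟨pg, hpgP⟩ : ↥(P : Subgroup G)), (⟨x, hx⟩ : ↥(P : Subgroup G))⁆,
          Subgroup.commutator_mem_commutator (Subgroup.mem_top _) (Subgroup.mem_top _), rfl⟩
      rw [← hker, MonoidHom.mem_ker] at hcq
      have : π pg * π x * (π pg)⁻¹ * (π x)⁻¹ = 1 := by
        simpa [map_mul, map_inv] using hcq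
      have e1' : π pg * π x * (π pg)⁻¹ = π x := by rwa [mul_inv_eq_one] at this
      rwa [mul_inv_eq_iff_eq_mul] at e1'
    rw [hgfac, map_mul]
    calc π x * (π pg * π kg) = (π x * π pg) * π kg := (mul_assoc _ _ _).symm
      _ = (π pg * π x) * π kg := by rw [c2]
      _ = π pg * (π x * π kg) := mul_assoc _ _ _
      _ = π pg * (π kg * π x) := by rw [c1]
      _ = (π pg * π kg) * π x := (mul_assoc _ _ _).symm
  -- Burnside's normal p-complement theorem in G/Q
  have hcompPb := MonoidHom.ker_transferSylow_isComplement' Pb hNC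
  set Hb := (MonoidHom.transferSylow Pb hNC).ker with hHbdef
  have hpHb : ¬ p ∣ Nat.card Hb := MonoidHom.not_dvd_card_ker_transferSylow Pb hNC
  -- pull back to K
  set K := Subgroup.comap π Hb with hKdef
  haveI hKn : K.Normal := Subgroup.normal_comap π
  have hQK : Q ≤ K := by
    intro q hq
    show π q ∈ Hb
    have : π q = 1 := by rw [← MonoidHom.mem_ker, hker]; exact hq
    rw [this]; exact Hb.one_mem
  have hKmap : K.map π = Hb := Subgroup.map_comap_eq_self_of_surjective hπs Hb
  have hidx : (Q.subgroupOf K).index = Nat.card Hb := by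
    have hkerf : (π.comp K.subtype).ker = Q.subgroupOf K := by
      rw [← MonoidHom.comap_ker, hker]; rfl
    have hrangef : (π.comp K.subtype).range = Hb := by
      rw [MonoidHom.range_comp, Subgroup.range_subtype, hKmap]
    rw [← hkerf, Subgroup.index_ker, hrangef]
  have hQpg : IsPGroup p Q := P.2.to_le hQP
  have hcardQsub : Nat.card (Q.subgroupOf K) = Nat.card Q :=
    Nat.card_congr (Subgroup.subgroupOfEquivOfLe hQK).toEquiv
  obtain ⟨nq, hnq⟩ := IsPGroup.iff_card.mp hQpg
  have hcopQK : Nat.Coprime (Nat.card (Q.subgroupOf K)) (Q.subgroupOf K).index := by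
    rw [hidx, hcardQsub, hnq]
    exact Nat.Coprime.pow_left _ ((Nat.Prime.coprime_iff_not_dvd Fact.out).mpr hpHb)
  obtain ⟨H', hH'⟩ := Subgroup.exists_right_complement'_of_coprime hcopQK
  set H := H'.map K.subtype with hHdef
  have hHK : H ≤ K := Subgroup.map_subtype_le _
  have hHsub : H.subgroupOf K = H' := by
    rw [hHdef]
    exact Subgroup.comap_map_eq_self (by rw [Subgroup.ker_subtype]; exact bot_le)
  have hcardH : Nat.card H = Nat.card Hb := by
    have e1 : Nat.card H = Nat.card H' :=
      (Nat.card_congr (Subgroup.equivMapOfInjective H' K.subtype K.subtype_injective).toEquiv).symm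
    rw [e1, ← hidx]
    exact (hH'.symm.index_eq_card).symm
  have hpH : ¬ p ∣ Nat.card H := by rw [hcardH]; exact hpHb
  have hdisjQH : Disjoint Q H := by
    rw [disjoint_iff]
    apply inf_eq_bot_of_coprime
    rw [hnq]
    exact Nat.Coprime.pow_left _ ((Nat.Prime.coprime_iff_not_dvd Fact.out).mpr hpH)
  -- Frattini-type argument : G = Q * N_G(H)
  have hfrat : ∀ g : G, ∃ q ∈ Q, ∃ m ∈ (Subgroup.normalizer (H : Set G)), g = q * m := by
    intro g
    have hHgK : H.map (MulAut.conj g).toMonoidHom ≤ K := by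
      rintro - ⟨h, hh, rfl⟩
      simpa using hKn.conj_mem _ (hHK hh) g
    have hcardHg : Nat.card (H.map (MulAut.conj g).toMonoidHom) = Nat.card H :=
      (Nat.card_congr (Subgroup.equivMapOfInjective H _ (MulEquiv.injective _)).toEquiv).symm
    have hdisjQHg : Disjoint Q (H.map (MulAut.conj g).toMonoidHom) := by
      rw [disjoint_iff]
      apply inf_eq_bot_of_coprime
      rw [hnq, hcardHg]
      exact Nat.Coprime.pow_left _ ((Nat.Prime.coprime_iff_not_dvd Fact.out).mpr hpH)
    have hcK : Subgroup.IsComplement' (Q.subgroupOf K)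
        ((H.map (MulAut.conj g).toMonoidHom).subgroupOf K) := by
      apply Subgroup.isComplement'_of_card_mul_and_disjoint
      · have e1 : Nat.card ((H.map (MulAut.conj g).toMonoidHom).subgroupOf K) =
            Nat.card H := by
          rw [← hcardHg]
          exact Nat.card_congr (Subgroup.subgroupOfEquivOfLe hHgK).toEquiv
        have e2 := hH'.card_mul
        have e3 : Nat.card H' = Nat.card H := by
          rw [← hHsub]
          exact Nat.card_congr (Subgroup.subgroupOfEquivOfLe hHK).toEquiv
        rw [e1, ← e3, ← e2]
      · rw [disjoint_iff]
        refine le_antisymm ?_ bot_le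
        rintro x ⟨h1, h2⟩
        have hx : (x : G) ∈ Q ⊓ H.map (MulAut.conj g).toMonoidHom := ⟨h1, h2⟩
        rw [hdisjQHg.eq_bot] at hx
        exact Subtype.ext hx
    have hQsubpg : IsPGroup p (Q.subgroupOf K) :=
      IsPGroup.iff_card.mpr ⟨nq, by rw [hcardQsub, hnq]⟩
    obtain ⟨k, hk⟩ := exists_conj_of_isComplement'_pgroup (p := p)
      (Nat.card (Q.subgroupOf K)) ↥K inferInstance inferInstance (Q.subgroupOf K) H'
      ((H.map (MulAut.conj g).toMonoidHom).subgroupOf K) inferInstance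
      hQsubpg hcopQK le_rfl hH' hcK
    -- push the conjugacy up to G
    have hpush := congrArg (Subgroup.map K.subtype) hk
    rw [map_subtype_conj, Subgroup.subgroupOf_map_subtype, inf_of_le_left hHgK,
      ← hHdef] at hpush
    have hm : (k : G)⁻¹ * g ∈ (Subgroup.normalizer (H : Set G)) := by
      apply mem_normalizer_of_map_conj
      rw [← conj_mul_map, hpush, conj_mul_map, inv_mul_cancel]
      ext x
      simp
    obtain ⟨⟨qk, hk'⟩, hqh⟩ := hH'.2 k
    have hqmem : ((qk : ↥K) : G) ∈ Q := qk.2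
    have hhmem : ((hk' : ↥K) : G) ∈ H := ⟨(hk' : ↥K), hk'.2, rfl⟩
    refine ⟨((qk : ↥K) : G), hqmem, ((hk' : ↥K) : G) * ((k : G)⁻¹ * g),
      (Subgroup.normalizer (H : Set G)).mul_mem (Subgroup.le_normalizer hhmem) hm, ?_⟩
    have hqh' : ((qk : ↥K) : G) * ((hk' : ↥K) : G) = (k : G) := by
      have : ((qk : ↥K) * (hk' : ↥K) : ↥K) = k := hqh
      exact congrArg Subtype.val this
    rw [← mul_assoc, hqh', mul_inv_cancel_left]
  -- P normalizes H, via the Frattini subgroup property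
  have hPnorm : (P : Subgroup G) ≤ (Subgroup.normalizer (H : Set G)) := by
    have hsup : ((Subgroup.normalizer (H : Set G)).subgroupOf (P : Subgroup G)) ⊔ frattini ↥(P : Subgroup G) = ⊤ := by
      rw [eq_top_iff]
      intro x _
      obtain ⟨q, hq, m, hm, hx⟩ := hfrat (x : G)
      have hqP : q ∈ (P : Subgroup G) := hQP hq
      have hmP : m ∈ (P : Subgroup G) := by
        have hminv : m = q⁻¹ * (x : G) := by rw [hx]; group
        rw [hminv]; exact Subgroup.mul_mem _ (Subgroup.inv_mem _ hqP) x.2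
      have hxeq : x = (⟨q, hqP⟩ : ↥(P : Subgroup G)) * ⟨m, hmP⟩ := Subtype.ext hx
      rw [hxeq]
      apply Subgroup.mul_mem
      · apply Subgroup.mem_sup_right
        obtain ⟨y, hy, hyq⟩ := hΦ hq
        have hyeq : y = (⟨q, hqP⟩ : ↥(P : Subgroup G)) := Subtype.ext hyq
        rwa [← hyeq]
      · apply Subgroup.mem_sup_left
        exact hm
    have htop := frattini_nongenerating hsup
    exact Subgroup.subgroupOf_eq_top.mp htop
  -- disjointness and cardinality
  obtain ⟨np, hnp⟩ := IsPGroup.iff_card.mp P.2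
  have hdisjPH : Disjoint (P : Subgroup G) H := by
    rw [disjoint_iff]
    apply inf_eq_bot_of_coprime
    rw [hnp]
    exact Nat.Coprime.pow_left _ ((Nat.Prime.coprime_iff_not_dvd Fact.out).mpr hpH)
  have hcardG : Nat.card (P : Subgroup G) * Nat.card H = Nat.card G := by
    have hcardP : Nat.card (P : Subgroup G) = Nat.card (Pb : Subgroup (G ⧸ Q)) * Nat.card Q := by
      have hkerf : (π.comp (P : Subgroup G).subtype).ker = Q.subgroupOf (P : Subgroup G) := by
        rw [← MonoidHom.comap_ker, hker]; rfl
      have hrangef : (π.comp (P : Subgroup G).subtype).range = (Pb : Subgroup (G ⧸ Q)) := by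
        rw [MonoidHom.range_comp, Subgroup.range_subtype, hPbcoe]
      have e1 := Subgroup.card_eq_card_quotient_mul_card_subgroup
        (π.comp (P : Subgroup G).subtype).ker
      have e2 : Nat.card (↥(P : Subgroup G) ⧸ (π.comp (P : Subgroup G).subtype).ker)
          = Nat.card (Pb : Subgroup (G ⧸ Q)) := by
        rw [← hrangef]
        exact Nat.card_congr (QuotientGroup.quotientKerEquivRange _).toEquiv
      have e3 : Nat.card (π.comp (P : Subgroup G).subtype).ker = Nat.card Q := by
        rw [hkerf]
        exact Nat.card_congr (Subgroup.subgroupOfEquivOfLe hQP).toEquiv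
      rw [e1, e2, e3]
    have hcardGq : Nat.card G = Nat.card (G ⧸ Q) * Nat.card Q :=
      Subgroup.card_eq_card_quotient_mul_card_subgroup Q
    have hcardQb : Nat.card Hb * Nat.card (Pb : Subgroup (G ⧸ Q)) = Nat.card (G ⧸ Q) :=
      hcompPb.card_mul
    rw [hcardP, hcardH]
    calc (Nat.card (Pb : Subgroup (G ⧸ Q)) * Nat.card Q) * Nat.card Hb
        = (Nat.card Hb * Nat.card (Pb : Subgroup (G ⧸ Q))) * Nat.card Q := by ring
      _ = Nat.card (G ⧸ Q) * Nat.card Q := by rw [hcardQb]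
      _ = Nat.card G := hcardGq.symm
  -- H is normal in G
  have hHnormal : H.Normal := by
    rw [← Subgroup.normalizer_eq_top_iff]
    apply Subgroup.eq_top_of_card_eq
    refine le_antisymm (Nat.card_le_card_of_injective _ Subtype.val_injective) ?_
    have hinj : Function.Injective (fun x : (↥(P : Subgroup G)) × (↥H) =>
        (⟨(x.1 : G) * (x.2 : G), Subgroup.mul_mem _ (hPnorm x.1.2)
          (Subgroup.le_normalizer x.2.2)⟩ : ↥(Subgroup.normalizer (H : Set G)))) := by
      intro a b hab
      exact Subgroup.mul_injective_of_disjoint hdisjPH (congrArg Subtype.val hab)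
    calc Nat.card G = Nat.card (P : Subgroup G) * Nat.card H := hcardG.symm
      _ = Nat.card ((↥(P : Subgroup G)) × (↥H)) := (Nat.card_prod _ _).symm
      _ ≤ Nat.card ↥(Subgroup.normalizer (H : Set G)) := Nat.card_le_card_of_injective _ hinj
  exact ⟨P, H, hHnormal, Subgroup.isComplement'_of_card_mul_and_disjoint hcardG hdisjPH⟩
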